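/- Let (λ, f) be an eigenpair of ℋ_p, let A₁,…,A_m be the nodal domains of f, and for each i let f|_{A_i} : V → ℝ be the function equal to f on A_i and 0 elsewhere. Then ℛ(g) ≤ λ for every nonzero g in the linear span of {f|_{A₁},…,f|_{A_m}}. -/

import Mathlib

noncomputable section

open Finset

/-- `φ_p(x) = |x|^{p-2} x` (real exponent, `φ_p(0) = 0`). -/
def phiP (p x : ℝ) : ℝ := |x| ^ (p - 2) * x

/-- The generalized `p`-Laplacian `ℋ_p`.  The edge-weight function `ω` is assumed to be
symmetric and to vanish on pairs of non-adjacent vertices, so the sum over all vertices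
is the sum over the neighbours of `u`. -/
def genLap {V : Type*} [Fintype V] (ω : V → V → ℝ) (κ : V → ℝ) (p : ℝ)
    (f : V → ℝ) (u : V) : ℝ :=
  (∑ v : V, ω u v * phiP p (f u - f v)) + κ u * phiP p (f u)

/-- `(lam, f)` is an eigenpair of `ℋ_p`. -/
def IsEigenpair {V : Type*} [Fintype V] (ω : V → V → ℝ) (κ ϱ : V → ℝ) (p lam : ℝ)
    (f : V → ℝ) : Prop :=
  f ≠ 0 ∧ ∀ u, genLap ω κ p f u = lam * (ϱ u * phiP p (f u))

/-- The Rayleigh quotient `ℛ` of `ℋ_p` (each edge `uv` is counted once: the double sum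
counts it twice, whence the factor `1/2`). -/
def rayleigh {V : Type*} [Fintype V] (ω : V → V → ℝ) (κ ϱ : V → ℝ) (p : ℝ)
    (f : V → ℝ) : ℝ :=
  ((1 / 2) * ∑ u : V, ∑ v : V, ω u v * |f u - f v| ^ p + ∑ u : V, κ u * |f u| ^ p) /
    ∑ u : V, ϱ u * |f u| ^ p

/-- The `p`-sphere `𝒮_p`. -/
def pSphere (V : Type*) [Fintype V] (p : ℝ) : Set (V → ℝ) := {f | ∑ u : V, |f u| ^ p = 1}

/-- The Krasnoselskii genus of a (symmetric) subset of `ℝ^V`. -/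
def krasGenus {V : Type*} [Fintype V] (A : Set (V → ℝ)) : ℕ∞ :=
  sInf {n : ℕ∞ | ∃ k : ℕ, n = (k : ℕ∞) ∧ ∃ φ : (V → ℝ) → (Fin k → ℝ),
    ContinuousOn φ A ∧ (∀ x ∈ A, φ (-x) = -φ x) ∧ ∀ x ∈ A, φ x ≠ 0}

/-- The `k`-th variational eigenvalue of `ℋ_p`: the min over closed symmetric subsets of the
`p`-sphere of genus at least `k` of the max of the Rayleigh quotient. -/
def varEig {V : Type*} [Fintype V] (ω : V → V → ℝ) (κ ϱ : V → ℝ) (p : ℝ) (k : ℕ) : ℝ :=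
  sInf {r : ℝ | ∃ A : Set (V → ℝ), A ⊆ pSphere V p ∧ IsClosed A ∧ (∀ f ∈ A, -f ∈ A) ∧
    (k : ℕ∞) ≤ krasGenus A ∧ IsGreatest (rayleigh ω κ ϱ p '' A) r}

/-- The subgraph `𝒢₊(f)`: vertices where `f ≠ 0`, edges where `f` has equal nonzero signs. -/
def posGraph {V : Type*} (G : SimpleGraph V) (f : V → ℝ) : SimpleGraph V where
  Adj u v := G.Adj u v ∧ 0 < f u * f v
  symm := by
    constructor
    intro u v h
    exact ⟨h.1.symm, by rw [mul_comm]; exact h.2⟩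
  loopless := ⟨fun u h => G.loopless.irrefl u h.1⟩

/-- The number `ν(f)` of (strong) nodal domains of `f`: the number of connected components of
`𝒢₊(f)` consisting of vertices where `f` is nonzero. -/
def nodalCount {V : Type*} (G : SimpleGraph V) (f : V → ℝ) : ℕ :=
  {c : (posGraph G f).ConnectedComponent |
    ∀ u, (posGraph G f).connectedComponentMk u = c → f u ≠ 0}.ncard

/-- The subgraph of edges on which `f` changes sign. -/
def negGraph {V : Type*} (G : SimpleGraph V) (f : V → ℝ) : SimpleGraph V where
  Adj u v := G.Adj u v ∧ f u * f v < 0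
  symm := by
    constructor
    intro u v h
    exact ⟨h.1.symm, by rw [mul_comm]; exact h.2⟩
  loopless := ⟨fun u h => G.loopless.irrefl u h.1⟩

/-- `ζ(f)`: the number of edges on which `f` changes sign. -/
def zetaCount {V : Type*} [Fintype V] (G : SimpleGraph V) (f : V → ℝ) : ℕ :=
  (negGraph G f).edgeSet.ncard

/-- `z(f)`: the number of vertices where `f` vanishes. -/
def zeroCount {V : Type*} [Fintype V] (f : V → ℝ) : ℕ := {u : V | f u = 0}.ncard

/-- `l(f)`: the number of independent loops (cycle rank) of `𝒢₊(f)`,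
`|E(𝒢₊(f))| − |V(𝒢₊(f))| + ν(f)`. -/
def loopCount {V : Type*} [Fintype V] (G : SimpleGraph V) (f : V → ℝ) : ℤ :=
  ((posGraph G f).edgeSet.ncard : ℤ) - ({u : V | f u ≠ 0}.ncard : ℤ) + (nodalCount G f : ℤ)

/-- The subgraph `𝒢'(f)` of `𝒢` induced on the support of `f` (vertices with `f = 0` are
deleted together with all incident edges; in this encoding they are kept as isolated
vertices, which are discarded in the counts below). -/
def suppGraph {V : Type*} (G : SimpleGraph V) (f : V → ℝ) : SimpleGraph V where
  Adj u v := G.Adj u v ∧ f u ≠ 0 ∧ f v ≠ 0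
  symm := by
    constructor
    intro u v h
    exact ⟨h.1.symm, h.2.2, h.2.1⟩
  loopless := ⟨fun u h => G.loopless.irrefl u h.1⟩

/-- `c(f)`: the number of connected components of `𝒢'(f)`. -/
def compCount {V : Type*} (G : SimpleGraph V) (f : V → ℝ) : ℕ :=
  {c : (suppGraph G f).ConnectedComponent |
    ∀ u, (suppGraph G f).connectedComponentMk u = c → f u ≠ 0}.ncard

/-- `β'(f)`: the number of independent loops of `𝒢'(f)`,
`|E(𝒢'(f))| − |V(𝒢'(f))| + c(f)`. -/
def betaSupp {V : Type*} [Fintype V] (G : SimpleGraph V) (f : V → ℝ) : ℤ :=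
  ((suppGraph G f).edgeSet.ncard : ℤ) - ({u : V | f u ≠ 0}.ncard : ℤ) + (compCount G f : ℤ)


lemma phiP_neg' (p x : ℝ) : phiP p (-x) = -phiP p x := by
  unfold phiP; rw [abs_neg]; ring

lemma phiP_mul_self' {p : ℝ} (hp : 1 < p) (x : ℝ) : phiP p x * x = |x| ^ p := by
  rcases eq_or_ne x 0 with h | h
  · simp [phiP, h, Real.zero_rpow (by linarith : p ≠ 0)]
  · have hx : (0:ℝ) < |x| := abs_pos.2 h
    have hxx : x * x = |x| ^ (2:ℝ) := by
      rw [show (2:ℝ) = ((2:ℕ):ℝ) by norm_num, Real.rpow_natCast, sq_abs]; ring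
    unfold phiP
    rw [mul_assoc, hxx, ← Real.rpow_add hx]
    norm_num

lemma jensen2' {p t s a b : ℝ} (hp : 1 ≤ p) (ht : 0 ≤ t) (hs : 0 ≤ s) (hts : t + s = 1)
    (ha : 0 ≤ a) (hb : 0 ≤ b) : (t * a + s * b) ^ p ≤ t * a ^ p + s * b ^ p := by
  have h := Real.rpow_arith_mean_le_arith_mean_rpow Finset.univ ![t, s] ![a, b]
    (by intro i _; fin_cases i <;> simpa) (by simp [Fin.sum_univ_succ, hts])
    (by intro i _; fin_cases i <;> simpa) hp
  simpa [Fin.sum_univ_succ] using h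

lemma key_ineq' {p : ℝ} (hp : 1 < p) {a b : ℝ} (ha : 0 ≤ a) (hb : b ≤ 0) (α β : ℝ) :
    |α * a - β * b| ^ p ≤ |α| ^ p * (phiP p (a - b) * a) + |β| ^ p * (phiP p (b - a) * b) := by
  have hd0 : 0 ≤ a - b := by linarith
  rcases eq_or_lt_of_le hd0 with hd | hd
  · have ha0 : a = 0 := by linarith
    have hb0 : b = 0 := by linarith
    simp [ha0, hb0, Real.zero_rpow (by linarith : p ≠ 0)]
  · set d := a - b with hdd
    have ht : 0 ≤ a / d := div_nonneg ha hd.le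
    have hs : 0 ≤ -b / d := div_nonneg (by linarith) hd.le
    have hts : a / d + -b / d = 1 := by
      rw [← add_div, show a + -b = d from by rw [hdd]; ring]
      exact div_self hd.ne'
    have habs : |α * a - β * b| ≤ d * (a / d * |α| + -b / d * |β|) := by
      have : α * a - β * b = d * (a / d * α + -b / d * β) := by
        field_simp
        try ring
      rw [this, abs_mul, abs_of_pos hd]
      exact mul_le_mul_of_nonneg_left (abs_add_le _ _ |>.trans (by rw [abs_mul, abs_mul,
        abs_of_nonneg ht, abs_of_nonneg hs])) hd.le
    have h1 : |α * a - β * b| ^ p ≤ (d * (a / d * |α| + -b / d * |β|)) ^ p :=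
      Real.rpow_le_rpow (abs_nonneg _) habs (by linarith)
    have h2 : (d * (a / d * |α| + -b / d * |β|)) ^ p
        ≤ d ^ p * (a / d * |α| ^ p + -b / d * |β| ^ p) := by
      rw [Real.mul_rpow hd.le (by positivity)]
      exact mul_le_mul_of_nonneg_left
        (jensen2' hp.le ht hs hts (abs_nonneg _) (abs_nonneg _)) (Real.rpow_nonneg hd.le p)
    have hphi1 : phiP p d * a = d ^ p * (a / d) := by
      unfold phiP
      rw [abs_of_pos hd]
      rw [show d ^ p = d ^ (p - 2) * d ^ (2:ℝ) from by rw [← Real.rpow_add hd]; norm_num]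
      rw [show (2:ℝ) = ((2:ℕ):ℝ) by norm_num, Real.rpow_natCast]
      field_simp
    have hphi2 : phiP p (b - a) * b = d ^ p * (-b / d) := by
      have hba : b - a = -d := by rw [hdd]; ring
      rw [hba, phiP_neg']
      unfold phiP
      rw [abs_of_pos hd]
      rw [show d ^ p = d ^ (p - 2) * d ^ (2:ℝ) from by rw [← Real.rpow_add hd]; norm_num]
      rw [show (2:ℝ) = ((2:ℕ):ℝ) by norm_num, Real.rpow_natCast]
      field_simp
    rw [hphi1, hphi2]
    calc |α * a - β * b| ^ p ≤ d ^ p * (a / d * |α| ^ p + -b / d * |β| ^ p) := h1.trans h2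
      _ = |α| ^ p * (d ^ p * (a / d)) + |β| ^ p * (d ^ p * (-b / d)) := by ring

/-- the Rayleigh quotient is bounded by `λ` on the span of the restrictions of
an eigenfunction `f` of `λ` to its nodal domains. -/
theorem stmt7 {V : Type*} [Fintype V]
    (G : SimpleGraph V) (ω : V → V → ℝ) (κ ϱ : V → ℝ) (p : ℝ) (hp : 1 < p)
    (hωsymm : ∀ u v, ω u v = ω v u)
    (hωpos : ∀ u v, G.Adj u v → 0 < ω u v)
    (hωzero : ∀ u v, ¬ G.Adj u v → ω u v = 0)
    (hϱpos : ∀ u, 0 < ϱ u)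
    (lam : ℝ) (f : V → ℝ) (heig : IsEigenpair ω κ ϱ p lam f) :
    ∀ g : V → ℝ, g ≠ 0 →
      g ∈ Submodule.span ℝ {h : V → ℝ | ∃ c : (posGraph G f).ConnectedComponent,
        (∀ u, (posGraph G f).connectedComponentMk u = c → f u ≠ 0) ∧
        h = Set.indicator {u : V | (posGraph G f).connectedComponentMk u = c} f} →
      rayleigh ω κ ϱ p g ≤ lam := by
  intro g hg hspan
  -- structural properties of g obtained by span induction
  have hstruct : (∀ u, f u = 0 → g u = 0) ∧
      (∀ u v, G.Adj u v → 0 < f u * f v → g u * f v = g v * f u) := by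
    refine Submodule.span_induction (p := fun x _ => (∀ u, f u = 0 → x u = 0) ∧
      (∀ u v, G.Adj u v → 0 < f u * f v → x u * f v = x v * f u)) ?_ ?_ ?_ ?_ hspan
    · rintro x ⟨c, hc, rfl⟩
      constructor
      · intro u hu
        by_cases h : (posGraph G f).connectedComponentMk u = c
        · rw [Set.indicator_of_mem
            (show u ∈ {w : V | (posGraph G f).connectedComponentMk w = c} from h)]
          exact hu
        · rw [Set.indicator_of_notMem
            (show u ∉ {w : V | (posGraph G f).connectedComponentMk w = c} from h)]
      · intro u v hadj hpos
        have hposadj : (posGraph G f).Adj u v := ⟨hadj, hpos⟩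
        have hcomp : (posGraph G f).connectedComponentMk u =
            (posGraph G f).connectedComponentMk v :=
          SimpleGraph.ConnectedComponent.sound hposadj.reachable
        by_cases h : (posGraph G f).connectedComponentMk v = c
        · rw [Set.indicator_of_mem
            (show u ∈ {w : V | (posGraph G f).connectedComponentMk w = c} from hcomp.trans h),
            Set.indicator_of_mem
            (show v ∈ {w : V | (posGraph G f).connectedComponentMk w = c} from h)]
          ring
        · rw [Set.indicator_of_notMem
            (show u ∉ {w : V | (posGraph G f).connectedComponentMk w = c} from by
              rw [Set.mem_setOf_eq, hcomp]; exact h),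
            Set.indicator_of_notMem
            (show v ∉ {w : V | (posGraph G f).connectedComponentMk w = c} from h)]
          ring
    · exact ⟨fun u _ => rfl, fun u v _ _ => by simp⟩
    · rintro x y _ _ ⟨hx1, hx2⟩ ⟨hy1, hy2⟩
      refine ⟨fun u hu => by simp [hx1 u hu, hy1 u hu], fun u v hadj hpos => ?_⟩
      simp only [Pi.add_apply, add_mul, hx2 u v hadj hpos, hy2 u v hadj hpos]
    · rintro a x _ ⟨hx1, hx2⟩
      refine ⟨fun u hu => by simp [hx1 u hu], fun u v hadj hpos => ?_⟩
      simp only [Pi.smul_apply, smul_eq_mul, mul_assoc, hx2 u v hadj hpos]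
  obtain ⟨hgzero, hgprop⟩ := hstruct
  set A : V → ℝ := fun u => if f u = 0 then 0 else g u / f u with hA
  have hgA : ∀ u, g u = A u * f u := by
    intro u
    by_cases h : f u = 0
    · simp [hA, h, hgzero u h]
    · simp [hA, h]
  have hAadj : ∀ u v, G.Adj u v → 0 < f u * f v → A u = A v := by
    intro u v hadj hpos
    have hu : f u ≠ 0 := fun h => by simp [h] at hpos
    have hv : f v ≠ 0 := fun h => by simp [h] at hpos
    simp only [hA, if_neg hu, if_neg hv]
    rw [div_eq_div_iff hu hv]
    exact hgprop u v hadj hpos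
  -- edge inequality
  have hedge : ∀ u v, ω u v * |g u - g v| ^ p ≤
      |A u| ^ p * (ω u v * (phiP p (f u - f v) * f u)) +
      |A v| ^ p * (ω u v * (phiP p (f v - f u) * f v)) := by
    intro u v
    by_cases hadj : G.Adj u v
    · have hω := (hωpos u v hadj).le
      have core : |g u - g v| ^ p ≤
          |A u| ^ p * (phiP p (f u - f v) * f u) + |A v| ^ p * (phiP p (f v - f u) * f v) := by
        rw [hgA u, hgA v]
        by_cases hsign : 0 < f u * f v
        · have hAA : A u = A v := hAadj u v hadj hsign
          rw [hAA]
          have : A v * f u - A v * f v = A v * (f u - f v) := by ring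
          rw [this, abs_mul, Real.mul_rpow (abs_nonneg _) (abs_nonneg _)]
          have hr : phiP p (f v - f u) = -phiP p (f u - f v) := by
            rw [show f v - f u = -(f u - f v) by ring, phiP_neg']
          have hx : |A v| ^ p * |f u - f v| ^ p
              = |A v| ^ p * (phiP p (f u - f v) * (f u - f v)) := by
            rw [phiP_mul_self' hp]
          exact le_of_eq (by rw [hx, hr]; ring)
        · push_neg at hsign
          rcases mul_nonpos_iff.1 hsign with ⟨h1, h2⟩ | ⟨h1, h2⟩
          · exact key_ineq' hp h1 h2 (A u) (A v)
          · have h := key_ineq' hp (a := -f u) (b := -f v) (by linarith) (by linarith)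
              (A u) (A v)
            have e1 : |A u * -f u - A v * -f v| = |A u * f u - A v * f v| := by
              rw [show A u * -f u - A v * -f v = -(A u * f u - A v * f v) by ring, abs_neg]
            have e2 : phiP p (-f u - -f v) * -f u = phiP p (f u - f v) * f u := by
              rw [show -f u - -f v = -(f u - f v) by ring, phiP_neg']; ring
            have e3 : phiP p (-f v - -f u) * -f v = phiP p (f v - f u) * f v := by
              rw [show -f v - -f u = -(f v - f u) by ring, phiP_neg']; ring
            rw [e1, e2, e3] at h
            exact h
      calc ω u v * |g u - g v| ^ p
          ≤ ω u v * (|A u| ^ p * (phiP p (f u - f v) * f u) +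
            |A v| ^ p * (phiP p (f v - f u) * f v)) := mul_le_mul_of_nonneg_left core hω
        _ = |A u| ^ p * (ω u v * (phiP p (f u - f v) * f u)) +
            |A v| ^ p * (ω u v * (phiP p (f v - f u) * f v)) := by ring
    · rw [hωzero u v hadj]
      simp
  -- denominator positivity
  have hgnn : ∀ u, 0 ≤ ϱ u * |g u| ^ p :=
    fun u => mul_nonneg (hϱpos u).le (Real.rpow_nonneg (abs_nonneg _) p)
  have hD : 0 < ∑ u : V, ϱ u * |g u| ^ p := by
    obtain ⟨u, hu⟩ := Function.ne_iff.1 hg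
    refine Finset.sum_pos' (fun v _ => hgnn v) ⟨u, Finset.mem_univ u, ?_⟩
    exact mul_pos (hϱpos u) (Real.rpow_pos_of_pos (abs_pos.2 hu) p)
  -- second double sum equals the first
  have hswap : (∑ u : V, ∑ v : V, |A v| ^ p * (ω u v * (phiP p (f v - f u) * f v)))
      = ∑ u : V, ∑ v : V, |A u| ^ p * (ω u v * (phiP p (f u - f v) * f u)) := by
    rw [Finset.sum_comm]
    exact Finset.sum_congr rfl fun u _ => Finset.sum_congr rfl fun v _ => by rw [hωsymm]
  -- sum bound
  have hS : (∑ u : V, ∑ v : V, ω u v * |g u - g v| ^ p)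
      ≤ 2 * ∑ u : V, ∑ v : V, |A u| ^ p * (ω u v * (phiP p (f u - f v) * f u)) := by
    calc (∑ u : V, ∑ v : V, ω u v * |g u - g v| ^ p)
        ≤ ∑ u : V, ∑ v : V, (|A u| ^ p * (ω u v * (phiP p (f u - f v) * f u)) +
          |A v| ^ p * (ω u v * (phiP p (f v - f u) * f v))) :=
          Finset.sum_le_sum fun u _ => Finset.sum_le_sum fun v _ => hedge u v
      _ = (∑ u : V, ∑ v : V, |A u| ^ p * (ω u v * (phiP p (f u - f v) * f u))) +
          ∑ u : V, ∑ v : V, |A v| ^ p * (ω u v * (phiP p (f v - f u) * f v)) := by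
          rw [← Finset.sum_add_distrib]
          exact Finset.sum_congr rfl fun u _ => Finset.sum_add_distrib
      _ = 2 * ∑ u : V, ∑ v : V, |A u| ^ p * (ω u v * (phiP p (f u - f v) * f u)) := by
          rw [hswap]; ring
  -- the potential term
  have hK : ∀ u : V, κ u * |g u| ^ p = |A u| ^ p * (κ u * (phiP p (f u) * f u)) := by
    intro u
    rw [phiP_mul_self' hp, hgA u, abs_mul, Real.mul_rpow (abs_nonneg _) (abs_nonneg _)]
    ring
  -- identify T + K with the eigenvalue expression
  have hTK : (∑ u : V, ∑ v : V, |A u| ^ p * (ω u v * (phiP p (f u - f v) * f u))) +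
      (∑ u : V, κ u * |g u| ^ p) = lam * ∑ u : V, ϱ u * |g u| ^ p := by
    have step : ∀ u : V, (∑ v : V, |A u| ^ p * (ω u v * (phiP p (f u - f v) * f u))) +
        κ u * |g u| ^ p = lam * (ϱ u * |g u| ^ p) := by
      intro u
      rw [hK u]
      have h1 : (∑ v : V, |A u| ^ p * (ω u v * (phiP p (f u - f v) * f u))) =
          |A u| ^ p * ((∑ v : V, ω u v * phiP p (f u - f v)) * f u) := by
        simp only [Finset.mul_sum, Finset.sum_mul]
        exact Finset.sum_congr rfl fun v _ => by ring
      rw [h1, ← mul_add]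
      have h2 : (∑ v : V, ω u v * phiP p (f u - f v)) * f u + κ u * (phiP p (f u) * f u)
          = genLap ω κ p f u * f u := by
        unfold genLap; ring
      rw [h2, heig.2 u]
      have h3 : |g u| ^ p = |A u| ^ p * |f u| ^ p := by
        rw [hgA u, abs_mul, Real.mul_rpow (abs_nonneg _) (abs_nonneg _)]
      rw [h3, ← phiP_mul_self' hp (f u)]
      ring
    calc (∑ u : V, ∑ v : V, |A u| ^ p * (ω u v * (phiP p (f u - f v) * f u))) +
        (∑ u : V, κ u * |g u| ^ p)
        = ∑ u : V, ((∑ v : V, |A u| ^ p * (ω u v * (phiP p (f u - f v) * f u))) +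
          κ u * |g u| ^ p) := by rw [Finset.sum_add_distrib]
      _ = ∑ u : V, lam * (ϱ u * |g u| ^ p) := Finset.sum_congr rfl fun u _ => step u
      _ = lam * ∑ u : V, ϱ u * |g u| ^ p := by rw [Finset.mul_sum]
  -- conclude
  unfold rayleigh
  rw [div_le_iff₀ hD]
  calc (1 / 2) * (∑ u : V, ∑ v : V, ω u v * |g u - g v| ^ p) + ∑ u : V, κ u * |g u| ^ p
      ≤ (1 / 2) * (2 * ∑ u : V, ∑ v : V, |A u| ^ p * (ω u v * (phiP p (f u - f v) * f u)))
        + ∑ u : V, κ u * |g u| ^ p := by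
        have := mul_le_mul_of_nonneg_left hS (by norm_num : (0:ℝ) ≤ 1 / 2)
        linarith
    _ = (∑ u : V, ∑ v : V, |A u| ^ p * (ω u v * (phiP p (f u - f v) * f u))) +
        ∑ u : V, κ u * |g u| ^ p := by ring
    _ = lam * ∑ u : V, ϱ u * |g u| ^ p := hTK
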